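/- Let f be a weighting method on n×n pairwise comparison matrices (assigning to each pairwise comparison matrix a positive vector summing to one) that is invariant to row multiplication. Then f satisfies aggregation invariance if and only if f satisfies group-coherence for choice. -/

import Mathlib

/-- A pairwise comparison matrix: all entries positive and `A j i = 1 / A i j`. -/
def IsPCM {n : ℕ} (A : Matrix (Fin n) (Fin n) ℝ) : Prop :=
  (∀ i j, 0 < A i j) ∧ ∀ i j, A j i = 1 / A i j

/-- Transformation of row multiplication on alternative `i` by factor `α`. -/
noncomputable def rowMul {n : ℕ} (A : Matrix (Fin n) (Fin n) ℝ) (i : Fin n) (α : ℝ) :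
    Matrix (Fin n) (Fin n) ℝ :=
  Matrix.of fun k l =>
    if k = i ∧ l ≠ i then α * A k l
    else if l = i ∧ k ≠ i then A k l / α
    else A k l

/-- The aggregate (entrywise geometric mean) of the pairwise comparison matrices
`A 0, …, A (k-1)`. -/
noncomputable def agg {n k : ℕ} (A : Fin k → Matrix (Fin n) (Fin n) ℝ) :
    Matrix (Fin n) (Fin n) ℝ :=
  Matrix.of fun i j => (∏ ℓ, A ℓ i j) ^ ((1 : ℝ) / k)

/-- Aggregation invariance of a weighting method `f`. -/
def AggregationInvariant {n : ℕ} (f : Matrix (Fin n) (Fin n) ℝ → Fin n → ℝ) : Prop :=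
  ∀ k : ℕ, 0 < k → ∀ A : Fin k → Matrix (Fin n) (Fin n) ℝ,
    (∀ ℓ, IsPCM (A ℓ)) → ∀ i j : Fin n, (∀ ℓ, f (A ℓ) j ≤ f (A ℓ) i) →
      f (agg A) j ≤ f (agg A) i ∧
      ((∃ ℓ, f (A ℓ) j < f (A ℓ) i) → f (agg A) j < f (agg A) i)

/-- Group-coherence for choice of a weighting method `f`. -/
def GroupCoherent {n : ℕ} (f : Matrix (Fin n) (Fin n) ℝ → Fin n → ℝ) : Prop :=
  ∀ k : ℕ, 0 < k → ∀ A : Fin k → Matrix (Fin n) (Fin n) ℝ,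
    (∀ ℓ, IsPCM (A ℓ)) → ∀ i : Fin n, (∀ ℓ, ∀ j : Fin n, f (A ℓ) j ≤ f (A ℓ) i) →
      (∀ j : Fin n, f (agg A) j ≤ f (agg A) i) ∧
      ((∃ ℓ, ∀ j : Fin n, j ≠ i → f (A ℓ) j < f (A ℓ) i) →
        ∀ j : Fin n, j ≠ i → f (agg A) j < f (agg A) i)

lemma rowMul_isPCM {n : ℕ} {A : Matrix (Fin n) (Fin n) ℝ} (hA : IsPCM A) (i : Fin n) {α : ℝ}
    (hα : 0 < α) : IsPCM (rowMul A i α) := by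
  obtain ⟨hp, hr⟩ := hA
  constructor
  · intro k l
    simp only [rowMul, Matrix.of_apply]
    split_ifs
    · exact mul_pos hα (hp k l)
    · exact div_pos (hp k l) hα
    · exact hp k l
  · intro k l
    have hkl := (hp k l).ne'
    have hαne : α ≠ 0 := hα.ne'
    simp only [rowMul, Matrix.of_apply]
    split_ifs <;>
      first
      | (exfalso; tauto)
      | (rw [hr k l]; field_simp; try ring)
      | (rw [hr k l])

lemma agg_isPCM {n k : ℕ} {A : Fin k → Matrix (Fin n) (Fin n) ℝ}
    (hA : ∀ ℓ, IsPCM (A ℓ)) : IsPCM (agg A) := by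
  have hpos : ∀ ℓ (i j : Fin n), 0 < A ℓ i j := fun ℓ => (hA ℓ).1
  constructor
  · intro i j
    exact Real.rpow_pos_of_pos (Finset.prod_pos fun ℓ _ => hpos ℓ i j) _
  · intro i j
    have h1 : ∏ ℓ, A ℓ j i = (∏ ℓ, A ℓ i j)⁻¹ := by
      rw [← Finset.prod_inv_distrib]
      exact Finset.prod_congr rfl fun ℓ _ => by rw [(hA ℓ).2 i j, one_div]
    simp only [agg, Matrix.of_apply, h1]
    rw [Real.inv_rpow (Finset.prod_pos fun ℓ _ => hpos ℓ i j).le]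
    exact (one_div _).symm

noncomputable def scaled {n : ℕ} (A : Matrix (Fin n) (Fin n) ℝ) (α : ℝ) :
    List (Fin n) → Matrix (Fin n) (Fin n) ℝ
  | [] => A
  | m :: L => rowMul (scaled A α L) m α

lemma scaled_isPCM {n : ℕ} {A : Matrix (Fin n) (Fin n) ℝ} (hA : IsPCM A) {α : ℝ} (hα : 0 < α) :
    ∀ L : List (Fin n), IsPCM (scaled A α L)
  | [] => hA
  | m :: L => rowMul_isPCM (scaled_isPCM hA hα L) m hα

lemma agg_rowMul {n k : ℕ} (hk : 0 < k) {A : Fin k → Matrix (Fin n) (Fin n) ℝ}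
    (hA : ∀ ℓ i j, 0 < A ℓ i j) (m : Fin n) {α : ℝ} (hα : 0 < α) :
    agg (fun ℓ => rowMul (A ℓ) m α) = rowMul (agg A) m α := by
  have hαk : (α ^ k) ^ ((1 : ℝ) / k) = α := by
    rw [← Real.rpow_natCast α k, ← Real.rpow_mul hα.le, mul_one_div,
      div_self (by exact_mod_cast hk.ne'), Real.rpow_one]
  ext p q
  simp only [agg, rowMul, Matrix.of_apply]
  by_cases h1 : p = m ∧ q ≠ m
  · simp only [if_pos h1]
    rw [Finset.prod_mul_distrib, Finset.prod_const, Finset.card_univ, Fintype.card_fin,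
      Real.mul_rpow (by positivity) (Finset.prod_nonneg fun ℓ _ => (hA ℓ p q).le), hαk]
  · simp only [if_neg h1]
    by_cases h2 : q = m ∧ p ≠ m
    · simp only [if_pos h2]
      rw [Finset.prod_div_distrib, Finset.prod_const, Finset.card_univ, Fintype.card_fin,
        Real.div_rpow (Finset.prod_nonneg fun ℓ _ => (hA ℓ p q).le) (by positivity), hαk]
    · simp only [if_neg h2]

lemma agg_scaled {n k : ℕ} (hk : 0 < k) {A : Fin k → Matrix (Fin n) (Fin n) ℝ}
    (hA : ∀ ℓ, IsPCM (A ℓ)) {α : ℝ} (hα : 0 < α) :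
    ∀ L : List (Fin n), agg (fun ℓ => scaled (A ℓ) α L) = scaled (agg A) α L
  | [] => rfl
  | m :: L => by
    show agg (fun ℓ => rowMul (scaled (A ℓ) α L) m α) = rowMul (scaled (agg A) α L) m α
    rw [agg_rowMul hk (fun ℓ => (scaled_isPCM (hA ℓ) hα L).1) m hα, agg_scaled hk hA hα L]

section Ratios

variable {n : ℕ} {f : Matrix (Fin n) (Fin n) ℝ → Fin n → ℝ}
  (hPos : ∀ A, IsPCM A → ∀ i, 0 < f A i)
  (hIRM : ∀ A, IsPCM A → ∀ i : Fin n, ∀ α : ℝ, 0 < α → ∀ j, j ≠ i →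
      f (rowMul A i α) i / f (rowMul A i α) j = α * (f A i / f A j))

include hPos hIRM

lemma rowMul_ratio_other {A : Matrix (Fin n) (Fin n) ℝ} (hA : IsPCM A) (i : Fin n) {α : ℝ}
    (hα : 0 < α) {l l' : Fin n} (hl : l ≠ i) (hl' : l' ≠ i) :
    f (rowMul A i α) l / f (rowMul A i α) l' = f A l / f A l' := by
  have hB := rowMul_isPCM hA i hα
  have pBi := hPos _ hB i
  have pBl := hPos _ hB l
  have pBl' := hPos _ hB l'
  have pAi := hPos _ hA i
  have pAl := hPos _ hA l
  have pAl' := hPos _ hA l'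
  have hBl := pBl.ne'
  have hBl' := pBl'.ne'
  have hAl := pAl.ne'
  have hAl' := pAl'.ne'
  have hαne := hα.ne'
  set B := rowMul A i α with hBdef
  have e1 : f B i * f A l = α * f A i * f B l := by
    have h1 := hIRM A hA i α hα l hl
    rw [← hBdef] at h1
    field_simp at h1
    first | linear_combination h1 | linear_combination -h1
  have e2 : f B i * f A l' = α * f A i * f B l' := by
    have h2 := hIRM A hA i α hα l' hl'
    rw [← hBdef] at h2
    field_simp at h2
    first | linear_combination h2 | linear_combination -h2
  rw [div_eq_div_iff hBl' hAl']
  have key : f B l * f A l' * (α * f A i) = f A l * f B l' * (α * f A i) := by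
    linear_combination f A l * e2 - f A l' * e1
  exact mul_right_cancel₀ (by positivity) key

lemma scaled_ratio {A : Matrix (Fin n) (Fin n) ℝ} (hA : IsPCM A) {α : ℝ} (hα : 0 < α) :
    ∀ L : List (Fin n), L.Nodup →
      (∀ l l', l ∉ L → l' ∉ L →
        f (scaled A α L) l / f (scaled A α L) l' = f A l / f A l') ∧
      (∀ m ∈ L, ∀ l, l ∉ L → f (scaled A α L) m / f (scaled A α L) l = α * (f A m / f A l))
  | [], _ => ⟨fun l l' _ _ => rfl, fun m hm => absurd hm List.not_mem_nil⟩
  | m :: L, hN => by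
    obtain ⟨hmL, hLN⟩ := List.nodup_cons.mp hN
    obtain ⟨IH1, IH2⟩ := scaled_ratio hA hα L hLN
    have hB := scaled_isPCM hA hα L
    constructor
    · intro l l' hl hl'
      have hlm : l ≠ m := fun h => hl (h ▸ (List.mem_cons_self : m ∈ m :: L))
      have hl'm : l' ≠ m := fun h => hl' (h ▸ (List.mem_cons_self : m ∈ m :: L))
      have hlL : l ∉ L := fun h => hl (List.mem_cons_of_mem m h)
      have hl'L : l' ∉ L := fun h => hl' (List.mem_cons_of_mem m h)
      show f (rowMul (scaled A α L) m α) l / f (rowMul (scaled A α L) m α) l' = _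
      rw [rowMul_ratio_other hPos hIRM hB m hα hlm hl'm, IH1 l l' hlL hl'L]
    · intro p hp l hl
      have hlm : l ≠ m := fun h => hl (h ▸ (List.mem_cons_self : m ∈ m :: L))
      have hlL : l ∉ L := fun h => hl (List.mem_cons_of_mem m h)
      rcases List.mem_cons.mp hp with h | hpL
      · subst h
        show f (rowMul (scaled A α L) p α) p / f (rowMul (scaled A α L) p α) l = _
        rw [hIRM _ hB p α hα l hlm, IH1 p l hmL hlL]
      · have hpm : p ≠ m := fun h => hmL (h ▸ hpL)
        show f (rowMul (scaled A α L) m α) p / f (rowMul (scaled A α L) m α) l = _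
        rw [rowMul_ratio_other hPos hIRM hB m hα hpm hlm, IH2 p hpL l hlL]

end Ratios


/-- For a weighting method that is invariant to row multiplication, aggregation
invariance and group-coherence for choice are equivalent. -/
theorem aggInv_iff_groupCoherent {n : ℕ}
    (f : Matrix (Fin n) (Fin n) ℝ → Fin n → ℝ)
    (hPos : ∀ A, IsPCM A → ∀ i, 0 < f A i)
    (hSum : ∀ A, IsPCM A → ∑ i, f A i = 1)
    (hIRM : ∀ A, IsPCM A → ∀ i : Fin n, ∀ α : ℝ, 0 < α → ∀ j, j ≠ i →
      f (rowMul A i α) i / f (rowMul A i α) j = α * (f A i / f A j)) :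
    AggregationInvariant f ↔ GroupCoherent f := by
  constructor
  · intro hAI k hk A hA i hyp
    refine ⟨fun j => (hAI k hk A hA i j (fun ℓ => hyp ℓ j)).1, ?_⟩
    rintro ⟨ℓ0, hstr⟩ j hj
    exact (hAI k hk A hA i j (fun ℓ => hyp ℓ j)).2 ⟨ℓ0, hstr j hj⟩
  · intro hGC k hk A hA i j hyp
    by_cases hji : j = i
    · subst hji
      exact ⟨le_refl _, fun ⟨ℓ, h⟩ => absurd h (lt_irrefl _)⟩
    haveI : Nonempty (Fin n) := ⟨i⟩
    haveI : Nonempty (Fin k) := ⟨⟨0, hk⟩⟩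
    set S : Finset (Fin n) := Finset.univ \ {i, j} with hS
    set L : List (Fin n) := S.toList with hL
    have hmem : ∀ m : Fin n, m ∈ L ↔ m ≠ i ∧ m ≠ j := by
      intro m
      simp [hL, hS]
    have hiL : i ∉ L := fun h => ((hmem i).1 h).1 rfl
    have hjL : j ∉ L := fun h => ((hmem j).1 h).2 rfl
    have hNd : L.Nodup := Finset.nodup_toList S
    have hAipos : ∀ ℓ, 0 < f (A ℓ) i := fun ℓ => hPos _ (hA ℓ) i
    -- choose the scaling factor α
    set g : Fin k × Fin n → ℝ := fun p =>
      if p.2 ∈ L then f (A p.1) i / f (A p.1) p.2 else 1 with hg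
    have hgpos : ∀ p : Fin k × Fin n, 0 < g p := by
      intro p
      simp only [hg]
      split_ifs
      · exact div_pos (hAipos p.1) (hPos _ (hA p.1) p.2)
      · exact one_pos
    set c : ℝ := Finset.univ.inf' Finset.univ_nonempty g with hc
    have hcpos : 0 < c := by
      rw [hc, Finset.lt_inf'_iff]
      exact fun p _ => hgpos p
    set α : ℝ := c / 2 with hαdef
    have hα : 0 < α := by positivity
    have hαlt : ∀ ℓ : Fin k, ∀ m ∈ L, α * (f (A ℓ) m / f (A ℓ) i) < 1 := by
      intro ℓ m hm
      have h1 : c ≤ g (ℓ, m) := Finset.inf'_le _ (Finset.mem_univ _)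
      have h2 : g (ℓ, m) = f (A ℓ) i / f (A ℓ) m := by simp [hg, hm]
      have pm := hPos _ (hA ℓ) m
      have pii := hAipos ℓ
      have hα2 : α < f (A ℓ) i / f (A ℓ) m := by
        rw [h2] at h1; rw [hαdef]; linarith
      calc α * (f (A ℓ) m / f (A ℓ) i)
          < (f (A ℓ) i / f (A ℓ) m) * (f (A ℓ) m / f (A ℓ) i) :=
            mul_lt_mul_of_pos_right hα2 (div_pos pm pii)
        _ = 1 := by field_simp
    -- the scaled matrices
    set B : Fin k → Matrix (Fin n) (Fin n) ℝ := fun ℓ => scaled (A ℓ) α L with hBdef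
    have hBpcm : ∀ ℓ, IsPCM (B ℓ) := fun ℓ => scaled_isPCM (hA ℓ) hα L
    have hBipos : ∀ ℓ, 0 < f (B ℓ) i := fun ℓ => hPos _ (hBpcm ℓ) i
    have ratio := fun ℓ : Fin k => scaled_ratio hPos hIRM (hA ℓ) hα L hNd
    have hBmlt : ∀ ℓ, ∀ m ∈ L, f (B ℓ) m < f (B ℓ) i := by
      intro ℓ m hm
      have heq := (ratio ℓ).2 m hm i hiL
      have hlt : f (B ℓ) m / f (B ℓ) i < 1 := by rw [heq]; exact hαlt ℓ m hm
      exact (div_lt_one (hBipos ℓ)).mp hlt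
    have hBj : ∀ ℓ, f (B ℓ) j / f (B ℓ) i = f (A ℓ) j / f (A ℓ) i := fun ℓ =>
      (ratio ℓ).1 j i hjL hiL
    have hyp' : ∀ ℓ, ∀ j' : Fin n, f (B ℓ) j' ≤ f (B ℓ) i := by
      intro ℓ j'
      by_cases hj'L : j' ∈ L
      · exact le_of_lt (hBmlt ℓ j' hj'L)
      · rcases not_and_or.mp (fun hc => hj'L ((hmem j').2 hc)) with h | h
        · rw [not_ne_iff.mp h]
        · rw [not_ne_iff.mp h]
          have hle : f (B ℓ) j / f (B ℓ) i ≤ 1 := by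
            rw [hBj ℓ]
            exact (div_le_one (hAipos ℓ)).mpr (hyp ℓ)
          exact (div_le_one (hBipos ℓ)).mp hle
    obtain ⟨hW, hSt⟩ := hGC k hk B hBpcm i hyp'
    have haggA : IsPCM (agg A) := agg_isPCM hA
    have haggB : agg B = scaled (agg A) α L := agg_scaled hk hA hα L
    have paggAi := hPos _ haggA i
    have paggBi : 0 < f (agg B) i := hPos _ (haggB ▸ scaled_isPCM haggA hα L) i
    have hratioAgg : f (agg B) j / f (agg B) i = f (agg A) j / f (agg A) i := by
      rw [haggB]
      exact (scaled_ratio hPos hIRM haggA hα L hNd).1 j i hjL hiL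
    constructor
    · have h1 : f (agg B) j / f (agg B) i ≤ 1 := (div_le_one paggBi).mpr (hW j)
      rw [hratioAgg] at h1
      exact (div_le_one paggAi).mp h1
    · rintro ⟨ℓ0, hlt0⟩
      have hstr : ∀ j' : Fin n, j' ≠ i → f (B ℓ0) j' < f (B ℓ0) i := by
        intro j' hj'
        by_cases hj'L : j' ∈ L
        · exact hBmlt ℓ0 j' hj'L
        · have hjj : j' = j := by
            rcases not_and_or.mp (fun hc => hj'L ((hmem j').2 hc)) with h | h
            · exact absurd (not_ne_iff.mp h) hj'
            · exact not_ne_iff.mp h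
          subst hjj
          have hlt : f (B ℓ0) j' / f (B ℓ0) i < 1 := by
            rw [hBj ℓ0]
            exact (div_lt_one (hAipos ℓ0)).mpr hlt0
          exact (div_lt_one (hBipos ℓ0)).mp hlt
      have h2 := hSt ⟨ℓ0, hstr⟩ j hji
      have h1 : f (agg B) j / f (agg B) i < 1 := (div_lt_one paggBi).mpr h2
      rw [hratioAgg] at h1
      exact (div_lt_one paggAi).mp h1
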